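/- Let $S$ be a finite set with $|S| \ge \frac{320 \log n}{(1-2p)^2}$ and $p \in (0,1/2)$, $n \ge |S|$. Assign to each unordered pair $(u,v)$ in $S$ an independent random weight $w_{uv}$ with $w_{uv} \ge x_{uv}$ pointwise, where $x_{uv} = 1$ with probability $1-p$ and $x_{uv} = -1$ with probability $p$, independently. Then with probability at least $1 - 1/\mathrm{poly}(n)$, every nonempty proper subset $A \subseteq S$ satisfies $\sum_{u \in A}\sum_{v \in S\setminus A} w_{uv} > 0$; i.e., $S$ has no nonpositive cut. -/

import Mathlib

open Finset MeasureTheory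
open scoped ENNReal

noncomputable def bern (q : ℝ) : Measure Bool :=
  ENNReal.ofReal q • Measure.dirac true + ENNReal.ofReal (1 - q) • Measure.dirac false

lemma bern_singleton (q : ℝ) (b : Bool) :
    bern q {b} = ENNReal.ofReal (if b then q else 1 - q) := by
  cases b <;> simp [bern, Measure.dirac_apply]

lemma bern_univ (q : ℝ) (h0 : 0 ≤ q) (h1 : q ≤ 1) : bern q Set.univ = 1 := by
  simp only [bern, Measure.coe_add, Measure.coe_smul, Pi.add_apply, Pi.smul_apply,
    MeasureTheory.Measure.dirac_apply_of_mem (Set.mem_univ _), smul_eq_mul, mul_one]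
  rw [← ENNReal.ofReal_add h0 (by linarith)]
  norm_num

instance bern_fin (q : ℝ) : IsFiniteMeasure (bern q) := by
  constructor
  simp only [bern, Measure.coe_add, Measure.coe_smul, Pi.add_apply, Pi.smul_apply,
    MeasureTheory.Measure.dirac_apply_of_mem (Set.mem_univ _), smul_eq_mul, mul_one]
  exact ENNReal.add_lt_top.2 ⟨ENNReal.ofReal_lt_top, ENNReal.ofReal_lt_top⟩

lemma numeric_core (n s : ℕ) (p : ℝ) (hp0 : 0 < p) (hp1 : p < 1/2) (hn2 : 2 ≤ n)
    (hS : 320 * Real.log n / (1 - 2*p)^2 ≤ (s : ℝ)) (hs2 : 2 ≤ s) :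
    (2 * Real.sqrt (p*(1-p))) ^ (s/2) ≤ (((n:ℝ))^4)⁻¹ := by
  obtain ⟨ε, hε⟩ : ∃ ε, ε = 1 - 2*p := ⟨_, rfl⟩
  rw [← hε] at hS
  have hε0 : 0 < ε := by rw [hε]; linarith
  have hε1 : ε < 1 := by rw [hε]; linarith
  obtain ⟨c, hc⟩ : ∃ c, c = 2 * Real.sqrt (p*(1-p)) := ⟨_, rfl⟩
  rw [← hc]
  have hpq : (0:ℝ) < p * (1-p) := by nlinarith
  have hc0 : 0 < c := by rw [hc]; positivity
  have hc2 : c^2 = 1 - ε^2 := by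
    rw [hc, mul_pow, Real.sq_sqrt hpq.le, hε]; ring
  have hlogn : 0 ≤ Real.log n := Real.log_nonneg (by exact_mod_cast hn2.trans' (by norm_num))
  have hlogc : Real.log c ≤ -ε^2/2 := by
    have h2 : 2 * Real.log c = Real.log (c^2) := by
      rw [Real.log_pow]; push_cast; ring
    have h3 : Real.log (c^2) ≤ c^2 - 1 :=
      Real.log_le_sub_one_of_pos (by positivity)
    rw [hc2] at h3 h2
    linarith
  have hkey : (((s/2 : ℕ)):ℝ) * Real.log c ≤ -(4 * Real.log n) := by
    have hhalf : (s:ℝ)/4 ≤ ((s/2 : ℕ):ℝ) := by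
      have : s ≤ 4 * (s/2) := by omega
      have := (Nat.cast_le (α := ℝ)).2 this
      push_cast at this
      linarith
    have hlc0 : Real.log c ≤ 0 := by nlinarith
    calc (((s/2 : ℕ)):ℝ) * Real.log c ≤ (s:ℝ)/4 * Real.log c := by
          exact mul_le_mul_of_nonpos_right hhalf hlc0
      _ ≤ (s:ℝ)/4 * (-ε^2/2) := by
          apply mul_le_mul_of_nonneg_left hlogc
          positivity
      _ = -((s:ℝ) * ε^2 / 8) := by ring
      _ ≤ -(320 * Real.log n / ε^2 * ε^2 / 8) := by
          have hmul : 320 * Real.log n / ε^2 * ε^2 ≤ (s:ℝ) * ε^2 :=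
            mul_le_mul_of_nonneg_right hS (by positivity)
          linarith
      _ = -(40 * Real.log n) := by field_simp; ring
      _ ≤ -(4 * Real.log n) := by linarith
  have hexp : c ^ (s/2) = Real.exp ((((s/2:ℕ)):ℝ) * Real.log c) := by
    rw [Real.exp_nat_mul, Real.exp_log hc0]
  rw [hexp]
  calc Real.exp ((((s/2:ℕ)):ℝ) * Real.log c) ≤ Real.exp (-(4 * Real.log n)) :=
        Real.exp_le_exp.2 hkey
    _ = (((n:ℝ))^4)⁻¹ := by
        rw [Real.exp_neg]
        congr 1
        rw [show (4:ℝ) * Real.log n = Real.log (((n:ℝ))^4) by rw [Real.log_pow]; push_cast; ring]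
        rw [Real.exp_log (by positivity)]

lemma real_est {p : ℝ} (hp0 : 0 < p) (hp1 : p < 1/2) {k m : ℕ} (hkm : k ≤ m)
    (hm2k : m ≤ 2*k) :
    p ^ k * (1-p) ^ (m-k) ≤ Real.sqrt (p*(1-p)) ^ m := by
  have hpq : (0:ℝ) ≤ p * (1-p) := by nlinarith
  have hq0 : (0:ℝ) ≤ 1 - p := by linarith
  have hd2 : Real.sqrt (p*(1-p)) ^ 2 = p * (1-p) := Real.sq_sqrt hpq
  have hsq : (p ^ k * (1-p) ^ (m-k)) ^ 2 ≤ (Real.sqrt (p*(1-p)) ^ m) ^ 2 := by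
    have hda : (Real.sqrt (p*(1-p)) ^ m) ^ 2 = p ^ m * (1-p) ^ m := by
      rw [← pow_mul, mul_comm m 2, pow_mul, hd2, mul_pow]
    rw [hda]
    have hlhs : (p ^ k * (1-p) ^ (m-k)) ^ 2
        = p ^ m * (p ^ (2*k - m) * (1-p) ^ (m - (2*k - m))) := by
      rw [mul_pow, ← pow_mul, ← pow_mul,
        show k*2 = m + (2*k-m) from by omega,
        show (m-k)*2 = m - (2*k-m) from by omega, pow_add, mul_assoc]
    have hrhs : p ^ m * (1-p) ^ m = p ^ m * ((1-p) ^ (2*k - m) * (1-p) ^ (m - (2*k-m))) := by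
      rw [← pow_add]
      congr 2
      omega
    rw [hlhs, hrhs]
    apply mul_le_mul_of_nonneg_left _ (by positivity)
    apply mul_le_mul_of_nonneg_right _ (by positivity)
    exact pow_le_pow_left₀ hp0.le (by linarith) _
  exact le_of_pow_le_pow_left₀ (by norm_num) (by positivity) hsq

lemma chernoff {N : ℕ} {p : ℝ} (hp0 : 0 < p) (hp1 : p < 1/2) (E : Finset (Sym2 (Fin N))) :
    Measure.pi (fun _ : Sym2 (Fin N) => bern p)
      {ω | ∑ e ∈ E, (if ω e then (-1:ℝ) else 1) ≤ 0}
    ≤ ENNReal.ofReal ((2 * Real.sqrt (p*(1-p))) ^ E.card) := by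
  classical
  have hq0 : (0:ℝ) ≤ 1 - p := by linarith
  set d := Real.sqrt (p*(1-p)) with hd
  have hd0 : 0 ≤ d := Real.sqrt_nonneg _
  set Bad : Finset (Sym2 (Fin N) → Bool) :=
    Finset.univ.filter (fun τ => (∀ e, e ∉ E → τ e = false) ∧
      ∑ e ∈ E, (if τ e then (-1:ℝ) else 1) ≤ 0) with hBad
  have hsub : {ω : Sym2 (Fin N) → Bool | ∑ e ∈ E, (if ω e then (-1:ℝ) else 1) ≤ 0}
      ⊆ ⋃ τ ∈ Bad, Set.pi Set.univ (fun e => if e ∈ E then ({τ e} : Set Bool) else Set.univ) := by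
    intro ω hω
    have hmem : (fun e => if e ∈ E then ω e else false) ∈ Bad := by
      simp only [hBad, mem_filter, Finset.mem_univ, true_and]
      refine ⟨fun e he => by simp [he], ?_⟩
      calc ∑ e ∈ E, (if (if e ∈ E then ω e else false) then (-1:ℝ) else 1)
          = ∑ e ∈ E, (if ω e then (-1:ℝ) else 1) :=
            Finset.sum_congr rfl fun e he => by simp [he]
        _ ≤ 0 := hω
    refine Set.mem_biUnion hmem ?_
    intro e _
    by_cases he : e ∈ E <;> simp [he]
  have hcyl : ∀ τ ∈ Bad,
      Measure.pi (fun _ : Sym2 (Fin N) => bern p)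
        (Set.pi Set.univ (fun e => if e ∈ E then ({τ e} : Set Bool) else Set.univ))
      ≤ ENNReal.ofReal (d ^ E.card) := by
    intro τ hτ
    rw [Measure.pi_pi]
    have h1 : ∀ e : Sym2 (Fin N),
        bern p (if e ∈ E then ({τ e} : Set Bool) else Set.univ)
        = if e ∈ E then ENNReal.ofReal (if τ e then p else 1-p) else 1 := by
      intro e
      by_cases he : e ∈ E
      · simp only [he, if_true]; exact bern_singleton p (τ e)
      · simp only [he, if_false]; exact bern_univ p hp0.le (by linarith)
    simp only [h1]
    rw [Finset.prod_ite_mem, Finset.univ_inter,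
      ← ENNReal.ofReal_prod_of_nonneg (fun e _ => by by_cases h : τ e <;> simp [h] <;> linarith)]
    apply ENNReal.ofReal_le_ofReal
    simp only [hBad, mem_filter, Finset.mem_univ, true_and] at hτ
    obtain ⟨-, hsum⟩ := hτ
    have hkm : (E.filter (fun e => τ e = true)).card ≤ E.card :=
      Finset.card_le_card (Finset.filter_subset _ _)
    have hsplit : (E.filter (fun e => τ e = true)).card
        + (E.filter (fun e => ¬ τ e = true)).card = E.card :=
      Finset.card_filter_add_card_filter_not _
    have hprod : ∏ e ∈ E, (if τ e then p else 1-p)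
        = p ^ (E.filter (fun e => τ e = true)).card
          * (1-p) ^ (E.card - (E.filter (fun e => τ e = true)).card) := by
      rw [← Finset.prod_filter_mul_prod_filter_not E (fun e => τ e = true)]
      have e1 : ∀ e ∈ E.filter (fun e => τ e = true), (if τ e then p else (1:ℝ)-p) = p :=
        fun e he => by simp only [Finset.mem_filter] at he; simp [he.2]
      have e2 : ∀ e ∈ E.filter (fun e => ¬ τ e = true),
          (if τ e then p else (1:ℝ)-p) = 1-p :=
        fun e he => by simp only [Finset.mem_filter] at he; simp [he.2]
      rw [Finset.prod_congr rfl e1, Finset.prod_congr rfl e2, Finset.prod_const,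
        Finset.prod_const,
        show (E.filter (fun e => ¬ τ e = true)).card
          = E.card - (E.filter (fun e => τ e = true)).card from by omega]
    have hcount : ∑ e ∈ E, (if τ e then (-1:ℝ) else 1)
        = ((E.card : ℝ)) - 2 * (E.filter (fun e => τ e = true)).card := by
      rw [← Finset.sum_filter_add_sum_filter_not E (fun e => τ e = true)]
      have e1 : ∀ e ∈ E.filter (fun e => τ e = true), (if τ e then (-1:ℝ) else 1) = -1 :=
        fun e he => by simp only [Finset.mem_filter] at he; simp [he.2]
      have e2 : ∀ e ∈ E.filter (fun e => ¬ τ e = true), (if τ e then (-1:ℝ) else 1) = 1 :=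
        fun e he => by simp only [Finset.mem_filter] at he; simp [he.2]
      rw [Finset.sum_congr rfl e1, Finset.sum_congr rfl e2, Finset.sum_const,
        Finset.sum_const]
      have : ((E.filter (fun e => ¬ τ e = true)).card : ℝ)
          = (E.card : ℝ) - (E.filter (fun e => τ e = true)).card := by
        rw [← hsplit]; push_cast; ring
      simp only [nsmul_eq_mul, mul_one, mul_neg_one, this]
      ring
    have hm2k : E.card ≤ 2 * (E.filter (fun e => τ e = true)).card := by
      rw [hcount] at hsum
      have : (E.card : ℝ) ≤ 2 * (E.filter (fun e => τ e = true)).card := by linarith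
      exact_mod_cast this
    rw [hprod]
    exact real_est hp0 hp1 hkm hm2k
  have hcard : Bad.card ≤ 2 ^ E.card := by
    have h1 : Bad.card ≤ (Finset.univ : Finset ({e // e ∈ E} → Bool)).card := by
      apply Finset.card_le_card_of_injOn (fun τ (e : {e // e ∈ E}) => τ e.1)
        (fun τ _ => Finset.mem_univ _)
      intro τ₁ h₁ τ₂ h₂ hEq
      rw [Finset.mem_coe, hBad, Finset.mem_filter] at h₁ h₂
      funext e
      by_cases he : e ∈ E
      · exact congrFun hEq ⟨e, he⟩
      · rw [h₁.2.1 e he, h₂.2.1 e he]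
    calc Bad.card ≤ (Finset.univ : Finset ({e // e ∈ E} → Bool)).card := h1
      _ = 2 ^ E.card := by
        rw [Finset.card_univ, Fintype.card_fun]
        simp
  calc Measure.pi (fun _ : Sym2 (Fin N) => bern p)
        {ω | ∑ e ∈ E, (if ω e then (-1:ℝ) else 1) ≤ 0}
      ≤ Measure.pi (fun _ : Sym2 (Fin N) => bern p)
        (⋃ τ ∈ Bad, Set.pi Set.univ (fun e => if e ∈ E then ({τ e} : Set Bool) else Set.univ)) :=
        measure_mono hsub
    _ ≤ ∑ τ ∈ Bad, Measure.pi (fun _ : Sym2 (Fin N) => bern p)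
        (Set.pi Set.univ (fun e => if e ∈ E then ({τ e} : Set Bool) else Set.univ)) :=
        measure_biUnion_finset_le _ _
    _ ≤ ∑ _τ ∈ Bad, ENNReal.ofReal (d ^ E.card) := Finset.sum_le_sum hcyl
    _ = (Bad.card : ℝ≥0∞) * ENNReal.ofReal (d ^ E.card) := by
        rw [Finset.sum_const, nsmul_eq_mul]
    _ ≤ ((2^E.card : ℕ) : ℝ≥0∞) * ENNReal.ofReal (d ^ E.card) :=
        mul_le_mul_left (Nat.cast_le.2 hcard) _
    _ = ENNReal.ofReal ((2:ℝ)^E.card * d ^ E.card) := by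
        rw [ENNReal.ofReal_mul (by positivity), ← ENNReal.ofReal_natCast (2^E.card)]
        norm_num
    _ = ENNReal.ofReal ((2 * d) ^ E.card) := by rw [mul_pow]

lemma aux1 (a : ℝ) (h : 2 ≤ a) : a * (a^4)⁻¹ ≤ 1 := by
  rw [← div_eq_mul_inv, div_le_one (by positivity)]
  nlinarith [sq_nonneg a, sq_nonneg (a^2 - a)]

lemma aux2 (a : ℝ) (h : 2 ≤ a) : (a+1) * (a * (a^4)⁻¹) ≤ a⁻¹ := by
  rw [show (a + 1) * (a * (a^4)⁻¹) = ((a+1) * a) / a^4 from by ring,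
    inv_eq_one_div, div_le_div_iff₀ (by positivity) (by positivity)]
  nlinarith [sq_nonneg a, sq_nonneg (a^2 - a)]

/-- Lemma `lm clique`: each unordered pair of `S` is corrupted
independently with probability `p` (pattern `ω`); the weight `w ω e` dominates
pointwise the baseline `x_e = 1` if uncorrupted, `-1` if corrupted.  If
`|S| ≥ 320 log n / (1-2p)²` (and `|S| ≤ n`), then with probability at least
`1 − 1/n`, every nonempty proper subset `A ⊆ S` has a strictly positive cut. -/
theorem stmt8 (N n : ℕ) (p : ℝ) (hp : 0 < p ∧ p < 1/2)
    (S : Finset (Fin N)) (hn : S.card ≤ n)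
    (hS : 320 * Real.log n / (1 - 2*p)^2 ≤ (S.card : ℝ))
    (w : (Sym2 (Fin N) → Bool) → Sym2 (Fin N) → ℝ)
    (hw : ∀ ω e, (if ω e then (-1 : ℝ) else 1) ≤ w ω e)
    (μ : Measure (Sym2 (Fin N) → Bool))
    (hμ : μ = Measure.pi (fun _ => bern p)) :
    1 - ((n : ℝ≥0∞))⁻¹ ≤
      μ {ω | ∀ A : Finset (Fin N), A ⊆ S → A.Nonempty → A ≠ S →
        0 < ∑ u ∈ A, ∑ v ∈ S \ A, w ω (Sym2.mk u v)} := by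
  classical
  obtain ⟨hp0, hp1⟩ := hp
  subst hμ
  -- trivial small cases
  match n, hn, hS with
  | 0, hn, hS => simp
  | 1, hn, hS => simp
  | (n+2), hn, hS => ?_
  set n' := n + 2 with hn'
  have hn2 : 2 ≤ n' := by omega
  clear_value n'
  clear hn'
  have hn2R : (2:ℝ) ≤ n' := by exact_mod_cast hn2
  have hnpos : (0:ℝ) < n' := by linarith
  -- basic parameters
  have hε0 : (0:ℝ) < 1 - 2*p := by linarith
  have hlogn : 0 ≤ Real.log n' := Real.log_nonneg (by linarith)
  have hs2 : 2 ≤ S.card := by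
    have h1 : Real.log 2 ≤ Real.log n' := by
      apply Real.log_le_log (by norm_num) hn2R
    have h2 : (0.6931471803:ℝ) < Real.log 2 := Real.log_two_gt_d9
    have h3 : 320 * Real.log n' ≤ 320 * Real.log n' / (1 - 2*p)^2 := by
      rw [le_div_iff₀ (by positivity)]
      have hle1 : (1 - 2*p)^2 ≤ 1 := by nlinarith
      nlinarith
    have : (2:ℝ) ≤ (S.card : ℝ) := by nlinarith
    exact_mod_cast this
  obtain ⟨c, hc⟩ : ∃ c, c = 2 * Real.sqrt (p*(1-p)) := ⟨_, rfl⟩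
  have hpq : (0:ℝ) < p * (1-p) := by nlinarith
  have hc0 : 0 ≤ c := by rw [hc]; positivity
  have hc2 : c^2 = 1 - (1-2*p)^2 := by
    rw [hc, mul_pow, Real.sq_sqrt hpq.le]; ring
  have hc1 : c ≤ 1 := by nlinarith
  have hK : c ^ (S.card/2) ≤ (((n':ℝ))^4)⁻¹ := by
    rw [hc]; exact numeric_core n' S.card p hp0 hp1 hn2 hS hs2
  have hKpos : 0 ≤ c ^ (S.card/2) := by positivity
  have hsn : (S.card:ℝ) ≤ (n':ℝ) := by exact_mod_cast hn
  have hsK1 : (S.card:ℝ) * c ^ (S.card/2) ≤ 1 := by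
    calc (S.card:ℝ) * c ^ (S.card/2) ≤ (n':ℝ) * (((n':ℝ))^4)⁻¹ :=
          mul_le_mul hsn hK hKpos (by linarith)
      _ ≤ 1 := aux1 _ hn2R
  have hsK0 : 0 ≤ (S.card:ℝ) * c ^ (S.card/2) := by positivity
  -- the family of bad cuts
  set 𝒜 : Finset (Finset (Fin N)) :=
    S.powerset.filter (fun A => A.Nonempty ∧ A ≠ S) with h𝒜
  set f : ℕ → ℝ := fun j => if j = 0 ∨ j = S.card then 0 else c ^ (j * (S.card - j)) with hf
  have hf0 : ∀ j, 0 ≤ f j := by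
    intro j; rw [hf]; dsimp only; split
    · exact le_refl 0
    · positivity
  have hterm : ∀ j ∈ Finset.range (S.card + 1),
      (S.card.choose j) • f j ≤ (S.card:ℝ) * c ^ (S.card/2) := by
    intro j hj
    rw [Finset.mem_range] at hj
    by_cases hj0 : j = 0 ∨ j = S.card
    · have hfj : f j = 0 := by rw [hf]; exact if_pos hj0
      rw [hfj, smul_zero]; exact hsK0
    have hj0' := hj0
    rw [not_or] at hj0'
    obtain ⟨hj0a, hj0b⟩ := hj0'
    have hjs : j ≤ S.card := by omega
    have hfj : f j = c ^ (j * (S.card - j)) := by rw [hf]; exact if_neg hj0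
    rw [hfj, nsmul_eq_mul]
    obtain ⟨u, hu⟩ : ∃ u, u = min j (S.card - j) := ⟨_, rfl⟩
    have hu1 : 1 ≤ u := by omega
    have hu2 : 2*u ≤ S.card := by omega
    have hch : S.card.choose j = S.card.choose u := by
      rcases le_total j (S.card - j) with h | h
      · rw [hu, min_eq_left h]
      · rw [hu, min_eq_right h, Nat.choose_symm hjs]
    have hexp : j * (S.card - j) = u * (S.card - u) := by
      rcases le_total j (S.card - j) with h | h
      · rw [hu, min_eq_left h]
      · rw [hu, min_eq_right h, show S.card - (S.card - j) = j from by omega,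
          Nat.mul_comm]
    calc (S.card.choose j : ℝ) * c^(j*(S.card-j))
        = (S.card.choose u : ℝ) * c^(u*(S.card-u)) := by rw [hch, hexp]
      _ ≤ (S.card:ℝ)^u * c^(u*(S.card-u)) := by
          apply mul_le_mul_of_nonneg_right _ (by positivity)
          exact_mod_cast Nat.choose_le_pow S.card u
      _ ≤ (S.card:ℝ)^u * c^(u*(S.card/2)) := by
          apply mul_le_mul_of_nonneg_left _ (by positivity)
          apply pow_le_pow_of_le_one hc0 hc1
          exact Nat.mul_le_mul_left u (by omega)
      _ = ((S.card:ℝ))^u * (c^(S.card/2))^u := by rw [← pow_mul, Nat.mul_comm]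
      _ = ((S.card:ℝ) * c^(S.card/2))^u := (mul_pow _ _ u).symm
      _ ≤ ((S.card:ℝ) * c^(S.card/2))^1 := pow_le_pow_of_le_one hsK0 hsK1 hu1
      _ = (S.card:ℝ) * c^(S.card/2) := pow_one _
  have hsumA : ∑ A ∈ 𝒜, c ^ (A.card * (S.card - A.card)) ≤ ((n':ℝ))⁻¹ := by
    have step1 : ∑ A ∈ 𝒜, c ^ (A.card * (S.card - A.card)) = ∑ A ∈ 𝒜, f A.card := by
      apply Finset.sum_congr rfl
      intro A hA
      rw [h𝒜, Finset.mem_filter, Finset.mem_powerset] at hA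
      obtain ⟨hAS, hAne, hAneS⟩ := hA
      have h1 : A.card ≠ 0 := by
        simpa [Finset.card_eq_zero] using fun h => hAne.ne_empty h
      have h2 : A.card ≠ S.card := by
        intro h
        exact hAneS (Finset.eq_of_subset_of_card_le hAS (le_of_eq h.symm))
      rw [hf]; simp [h1, h2]
    have step2 : ∑ A ∈ 𝒜, f A.card ≤ ∑ A ∈ S.powerset, f A.card := by
      apply Finset.sum_le_sum_of_subset_of_nonneg (Finset.filter_subset _ _)
      intro A _ _
      exact hf0 _
    have step3 : ∑ A ∈ S.powerset, f A.card
        = ∑ j ∈ Finset.range (S.card + 1), (S.card.choose j) • f j :=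
      Finset.sum_powerset_apply_card f
    have step4 : ∑ j ∈ Finset.range (S.card + 1), (S.card.choose j) • f j
        ≤ (S.card + 1 : ℝ) * ((S.card:ℝ) * c ^ (S.card/2)) := by
      calc ∑ j ∈ Finset.range (S.card + 1), (S.card.choose j) • f j
          ≤ ∑ _j ∈ Finset.range (S.card + 1), (S.card:ℝ) * c ^ (S.card/2) :=
            Finset.sum_le_sum hterm
        _ = (S.card + 1 : ℝ) * ((S.card:ℝ) * c ^ (S.card/2)) := by
            rw [Finset.sum_const, Finset.card_range, nsmul_eq_mul]
            push_cast; ring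
    have step5 : (S.card + 1 : ℝ) * ((S.card:ℝ) * c ^ (S.card/2)) ≤ ((n':ℝ))⁻¹ := by
      have h1 : (S.card + 1 : ℝ) * ((S.card:ℝ) * c ^ (S.card/2))
          ≤ ((n':ℝ) + 1) * ((n':ℝ) * (((n':ℝ))^4)⁻¹) := by
        apply mul_le_mul (by linarith) (mul_le_mul hsn hK hKpos (by linarith)) hsK0
          (by linarith)
      have h2 : ((n':ℝ) + 1) * ((n':ℝ) * (((n':ℝ))^4)⁻¹) ≤ ((n':ℝ))⁻¹ :=
        aux2 _ hn2R
      linarith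
    linarith
  -- bad-event inclusion
  set G : Set (Sym2 (Fin N) → Bool) :=
    {ω | ∀ A : Finset (Fin N), A ⊆ S → A.Nonempty → A ≠ S →
        0 < ∑ u ∈ A, ∑ v ∈ S \ A, w ω (Sym2.mk u v)} with hG
  set F : Finset (Fin N) → Set (Sym2 (Fin N) → Bool) := fun A =>
    {ω | ∑ e ∈ (A ×ˢ (S \ A)).image (fun x : Fin N × Fin N => Sym2.mk x.1 x.2), (if ω e then (-1:ℝ) else 1) ≤ 0} with hF
  have hinj : ∀ A : Finset (Fin N), A ⊆ S →
      ∀ x ∈ (A ×ˢ (S \ A) : Finset (Fin N × Fin N)), ∀ y ∈ A ×ˢ (S \ A),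
      Sym2.mk x.1 x.2 = Sym2.mk y.1 y.2 → x = y := by
    intro A hAS x hx y hy hxy
    obtain ⟨a, b⟩ := x
    obtain ⟨a', b'⟩ := y
    rw [Finset.mem_product, Finset.mem_sdiff] at hx hy
    dsimp only at hxy
    rw [Sym2.eq_iff] at hxy
    rcases hxy with ⟨h1, h2⟩ | ⟨h1, h2⟩
    · rw [h1, h2]
    · exfalso
      exact hy.2.2 (h1 ▸ hx.1)
  have hGc : Gᶜ ⊆ ⋃ A ∈ 𝒜, F A := by
    intro ω hω
    rw [Set.mem_compl_iff, hG, Set.mem_setOf_eq] at hω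
    push_neg at hω
    obtain ⟨A, hAS, hAne, hAneS, hcut⟩ := hω
    have hA𝒜 : A ∈ 𝒜 := by
      rw [h𝒜, Finset.mem_filter, Finset.mem_powerset]
      exact ⟨hAS, hAne, hAneS⟩
    refine Set.mem_biUnion hA𝒜 ?_
    rw [hF]
    show ∑ e ∈ (A ×ˢ (S \ A)).image (fun x : Fin N × Fin N => Sym2.mk x.1 x.2), (if ω e then (-1:ℝ) else 1) ≤ 0
    rw [Finset.sum_image (hinj A hAS), Finset.sum_product]
    calc ∑ u ∈ A, ∑ v ∈ S \ A, (if ω (Sym2.mk u v) then (-1:ℝ) else 1)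
        ≤ ∑ u ∈ A, ∑ v ∈ S \ A, w ω (Sym2.mk u v) :=
          Finset.sum_le_sum fun u _ => Finset.sum_le_sum fun v _ => hw ω _
      _ ≤ 0 := hcut
  -- measure of the bad event
  have hbad : Measure.pi (fun _ : Sym2 (Fin N) => bern p) Gᶜ ≤ ((n' : ℝ≥0∞))⁻¹ := by
    calc Measure.pi (fun _ : Sym2 (Fin N) => bern p) Gᶜ
        ≤ Measure.pi (fun _ : Sym2 (Fin N) => bern p) (⋃ A ∈ 𝒜, F A) := measure_mono hGc
      _ ≤ ∑ A ∈ 𝒜, Measure.pi (fun _ : Sym2 (Fin N) => bern p) (F A) :=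
          measure_biUnion_finset_le _ _
      _ ≤ ∑ A ∈ 𝒜, ENNReal.ofReal (c ^ (A.card * (S.card - A.card))) := by
          apply Finset.sum_le_sum
          intro A hA
          rw [h𝒜, Finset.mem_filter, Finset.mem_powerset] at hA
          have hcardE : ((A ×ˢ (S \ A)).image (fun x : Fin N × Fin N => Sym2.mk x.1 x.2)).card
              = A.card * (S.card - A.card) := by
            rw [Finset.card_image_of_injOn (fun x hx y hy hxy =>
              hinj A hA.1 x (Finset.mem_coe.1 hx) y (Finset.mem_coe.1 hy) hxy),
              Finset.card_product, Finset.card_sdiff_of_subset hA.1]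
          simp only [hF, hc]
          have hch := chernoff (N := N) hp0 hp1 ((A ×ˢ (S \ A)).image (fun x : Fin N × Fin N => Sym2.mk x.1 x.2))
          rw [hcardE] at hch
          exact hch
      _ = ENNReal.ofReal (∑ A ∈ 𝒜, c ^ (A.card * (S.card - A.card))) :=
          (ENNReal.ofReal_sum_of_nonneg fun A _ => pow_nonneg hc0 _).symm
      _ ≤ ENNReal.ofReal (((n':ℝ))⁻¹) := ENNReal.ofReal_le_ofReal hsumA
      _ = ((n' : ℝ≥0∞))⁻¹ := by
          rw [ENNReal.ofReal_inv_of_pos hnpos, ENNReal.ofReal_natCast]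
  -- total mass is 1
  have huniv : Measure.pi (fun _ : Sym2 (Fin N) => bern p) Set.univ = 1 := by
    rw [Measure.pi_univ]
    simp only [bern_univ p hp0.le (by linarith : p ≤ 1), Finset.prod_const_one]
  calc 1 - ((n' : ℝ≥0∞))⁻¹
      ≤ 1 - Measure.pi (fun _ : Sym2 (Fin N) => bern p) Gᶜ := tsub_le_tsub_left hbad 1
    _ ≤ Measure.pi (fun _ : Sym2 (Fin N) => bern p) G := by
        rw [tsub_le_iff_right]
        calc (1:ℝ≥0∞) = Measure.pi (fun _ : Sym2 (Fin N) => bern p) Set.univ := huniv.symm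
          _ = Measure.pi (fun _ : Sym2 (Fin N) => bern p) (G ∪ Gᶜ) := by
              rw [Set.union_compl_self]
          _ ≤ _ := measure_union_le _ _
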